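/- Let g be the real Lie algebra underlying the complex Heisenberg algebra, with basis E₁,…,E₆ and nonzero brackets [E₁,E₃]=E₅, [E₂,E₄]=-E₅, [E₂,E₃]=E₆, [E₁,E₄]=E₆. If J is any bi-invariant complex structure on g, then there exists b ∈ {1,-1} with J(E₅) = bE₆ and J(E₆) = -bE₅. Consequently, for any inner product on g for which E₅ and E₆ are not orthogonal, g admits no orthogonal bi-invariant complex structure. -/

import Mathlib

set_option maxHeartbeats 1000000


/-- On the real Lie algebra underlying the complex Heisenberg algebra, with basis
`E₁,…,E₆` and nonzero brackets `[E₁,E₃]=E₅`, `[E₂,E₄]=-E₅`, `[E₂,E₃]=E₆`, `[E₁,E₄]=E₆`,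
every bi-invariant complex structure `J` satisfies `J(E₅) = ±E₆`, `J(E₆) = ∓E₅`.
Consequently, for any inner product in which `E₅` and `E₆` are not orthogonal there is
no orthogonal bi-invariant complex structure. (Indices shifted: `E i` is `E_{i+1}`.) -/
theorem stmt18 (g : Type*) [LieRing g] [LieAlgebra ℝ g]
    (E : Module.Basis (Fin 6) ℝ g)
    (h13 : ⁅E 0, E 2⁆ = E 4) (h24 : ⁅E 1, E 3⁆ = -E 4)
    (h23 : ⁅E 1, E 2⁆ = E 5) (h14 : ⁅E 0, E 3⁆ = E 5)
    (h12 : ⁅E 0, E 1⁆ = 0) (h34 : ⁅E 2, E 3⁆ = 0)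
    (hc : ∀ i j : Fin 6, 4 ≤ (j : ℕ) → ⁅E i, E j⁆ = 0) :
    (∀ J : g →ₗ[ℝ] g, (∀ x : g, J (J x) = -x) → (∀ x y : g, J ⁅x, y⁆ = ⁅J x, y⁆) →
      ∃ b : ℝ, (b = 1 ∨ b = -1) ∧ J (E 4) = b • E 5 ∧ J (E 5) = -(b • E 4)) ∧
    ∀ B : g →ₗ[ℝ] g →ₗ[ℝ] ℝ, (∀ x y : g, B x y = B y x) →
      (∀ x : g, x ≠ 0 → 0 < B x x) → B (E 4) (E 5) ≠ 0 →
      ¬ ∃ J : g →ₗ[ℝ] g, (∀ x : g, J (J x) = -x) ∧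
          (∀ x y : g, J ⁅x, y⁆ = ⁅J x, y⁆) ∧
          (∀ x y : g, B (J x) (J y) = B x y) := by
  have key : ∀ J : g →ₗ[ℝ] g, (∀ x : g, J (J x) = -x) → (∀ x y : g, J ⁅x, y⁆ = ⁅J x, y⁆) →
      ∃ b : ℝ, (b = 1 ∨ b = -1) ∧ J (E 4) = b • E 5 ∧ J (E 5) = -(b • E 4) := by
    intro J hJ2 hbi
    set a : Fin 6 → ℝ := fun i => E.repr (J (E 0)) i with ha
    have hJE0 : J (E 0) = a 0 • E 0 + a 1 • E 1 + a 2 • E 2 + a 3 • E 3 + a 4 • E 4 + a 5 • E 5 := by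
      conv_lhs => rw [← E.sum_repr (J (E 0))]
      rw [Fin.sum_univ_six]
    have z32 : ⁅E 3, E 2⁆ = 0 := by rw [← lie_skew, h34, neg_zero]
    have z42 : ⁅E 4, E 2⁆ = 0 := by rw [← lie_skew, hc 2 4 (by decide), neg_zero]
    have z52 : ⁅E 5, E 2⁆ = 0 := by rw [← lie_skew, hc 2 5 (by decide), neg_zero]
    have z43 : ⁅E 4, E 3⁆ = 0 := by rw [← lie_skew, hc 3 4 (by decide), neg_zero]
    have z53 : ⁅E 5, E 3⁆ = 0 := by rw [← lie_skew, hc 3 5 (by decide), neg_zero]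
    have hJ4 : J (E 4) = a 0 • E 4 + a 1 • E 5 := by
      rw [← h13, hbi, hJE0]
      simp [add_lie, smul_lie, h13, h23, z32, z42, z52, lie_self]
    have hJ5 : J (E 5) = a 0 • E 5 - a 1 • E 4 := by
      rw [← h14, hbi, hJE0]
      simp [add_lie, smul_lie, h14, h24, h34, z43, z53, lie_self]
      module
    have heq : (a 0 * a 0 - a 1 * a 1) • E 4 + (2 * a 0 * a 1) • E 5 = -E 4 := by
      have h := hJ2 (E 4)
      rw [hJ4, map_add, map_smul, map_smul, hJ4, hJ5] at h
      rw [← h]; module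
    have c4 : a 0 * a 0 - a 1 * a 1 = -1 := by
      have := congrArg (fun v => E.repr v 4) heq
      simpa [Finsupp.single_apply] using this
    have c5 : 2 * a 0 * a 1 = 0 := by
      have := congrArg (fun v => E.repr v 5) heq
      simpa [Finsupp.single_apply] using this
    have ha0 : a 0 = 0 := by
      rcases mul_eq_zero.mp (by linarith [c5] : a 0 * a 1 = 0) with h | h
      · exact h
      · nlinarith
    have ha1 : a 1 = 1 ∨ a 1 = -1 := by
      apply mul_self_eq_one_iff.mp; nlinarith
    refine ⟨a 1, ha1, ?_, ?_⟩
    · rw [hJ4, ha0]; module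
    · rw [hJ5, ha0]; module
  refine ⟨key, ?_⟩
  rintro B hsymm hpos hne ⟨J, hJ2, hbi, hO⟩
  obtain ⟨b, hb, hJ4, hJ5⟩ := key J hJ2 hbi
  have h := hO (E 4) (E 5)
  rw [hJ4, hJ5] at h
  have hb2 : b * b = 1 := by rcases hb with h | h <;> rw [h] <;> ring
  simp only [map_smul, map_neg, LinearMap.smul_apply, LinearMap.neg_apply, smul_eq_mul] at h
  have hs := hsymm (E 4) (E 5)
  apply hne
  nlinarith [h, hs]
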